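/- Let γ > 0, A > 0, S, B ∈ ℝ with S ≥ eγA², B ≥ 0, and suppose γ(e-1)S - (1/2)(e²-1)γ²A² ≤ B. Then γS - γ²A²/2 ≤ (2e-1)B/(e-1)². -/
import Mathlib


theorem case_iii_exponent_bound (γ A S B : ℝ) (hγ : 0 < γ) (hA : 0 < A)
    (hS : S ≥ Real.exp 1 * γ * A ^ 2) (hB : 0 ≤ B)
    (h : γ * (Real.exp 1 - 1) * S - (1 / 2) * (Real.exp 1 ^ 2 - 1) * γ ^ 2 * A ^ 2 ≤ B) :
    γ * S - γ ^ 2 * A ^ 2 / 2 ≤ (2 * Real.exp 1 - 1) * B / (Real.exp 1 - 1) ^ 2 := by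
  have he : (1 : ℝ) < Real.exp 1 := by
    have := Real.add_one_lt_exp (x := 1) one_ne_zero
    linarith
  have he1 : 0 < Real.exp 1 - 1 := by linarith
  rw [le_div_iff₀ (by positivity)]
  have hx : Real.exp 1 * γ * A ^ 2 * γ ≤ S * γ := mul_le_mul_of_nonneg_right hS hγ.le
  nlinarith [mul_le_mul_of_nonneg_left h (by linarith : (0:ℝ) ≤ 2 * Real.exp 1 - 1),
    mul_le_mul_of_nonneg_left hx (mul_pos he1 (Real.exp_pos 1)).le, sq_nonneg (Real.exp 1 - 1)]
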